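/- Let k be an algebraically closed field and f a polynomial automorphism of A²_k of degree ≥ 2. Then the following are equivalent: (1) the indeterminacy points at infinity I_f and I_{f⁻¹} are distinct; (2) deg(f²) = deg(f)². -/

import Mathlib

open MvPolynomial Polynomial

/-- Composition of polynomial endomorphisms of affine `n`-space. -/
noncomputable def mvComp {k : Type*} [CommSemiring k] {n : ℕ}
    (g f : Fin n → MvPolynomial (Fin n) k) : Fin n → MvPolynomial (Fin n) k :=
  fun i => MvPolynomial.bind₁ f (g i)

/-- The degree of a polynomial endomorphism of affine `n`-space. -/
noncomputable def mvDeg {k : Type*} [CommSemiring k] {n : ℕ}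
    (f : Fin n → MvPolynomial (Fin n) k) : ℕ :=
  Finset.univ.sup fun i => (f i).totalDegree

/-- The highest homogeneous part of a polynomial endomorphism. -/
noncomputable def topPart {k : Type*} [CommSemiring k] {n : ℕ}
    (f : Fin n → MvPolynomial (Fin n) k) : Fin n → MvPolynomial (Fin n) k :=
  fun i => MvPolynomial.homogeneousComponent (mvDeg f) (f i)

namespace Stmt10
variable {k : Type*} [Field k]

lemma vec_ne_zero {w : Fin 2 → k} (hw : w ≠ 0) : w 0 ≠ 0 ∨ w 1 ≠ 0 := by
  by_contra h
  push_neg at h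
  exact hw (funext fun i => by fin_cases i <;> simp [h.1, h.2])

/-- parallel from vanishing cross product -/
lemma par_of_cross {w u : Fin 2 → k} (hw : w ≠ 0)
    (h : w 0 * u 1 - w 1 * u 0 = 0) : ∃ lam : k, u = lam • w := by
  rcases vec_ne_zero hw with h0 | h1
  · refine ⟨u 0 / w 0, funext fun i => ?_⟩
    have e1 : u 1 = w 1 * u 0 / w 0 := by
      field_simp
      linear_combination h
    fin_cases i
    · show u 0 = u 0 / w 0 * w 0
      field_simp
    · show u 1 = u 0 / w 0 * w 1
      rw [e1]; ring
  · refine ⟨u 1 / w 1, funext fun i => ?_⟩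
    have e0 : u 0 = w 0 * u 1 / w 1 := by
      field_simp
      linear_combination -h
    fin_cases i
    · show u 0 = u 1 / w 1 * w 0
      rw [e0]; ring
    · show u 1 = u 1 / w 1 * w 1
      field_simp

/-- divisibility of substitution differences -/
lemma dvd_aeval_sub {S : Type*} [CommRing S] [Algebra k S] (r : S) (a b : Fin 2 → S)
    (h : ∀ i, r ∣ a i - b i) (q : MvPolynomial (Fin 2) k) :
    r ∣ (MvPolynomial.aeval a) q - (MvPolynomial.aeval b) q := by
  induction q using MvPolynomial.induction_on with
  | C c => simp [sub_self]
  | add p q hp hq =>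
      simp only [map_add]
      have : aeval a p + aeval a q - (aeval b p + aeval b q)
          = (aeval a p - aeval b p) + (aeval a q - aeval b q) := by ring
      rw [this]; exact dvd_add hp hq
  | mul_X p i hp =>
      simp only [map_mul, MvPolynomial.aeval_X]
      have h2 := dvd_add (Dvd.dvd.mul_left (h i) ((MvPolynomial.aeval a) p))
        (Dvd.dvd.mul_right hp (b i))
      convert h2 using 1
      ring

lemma coeff_mul_of_natDegree_le {p q : k[X]} {a b : ℕ}
    (hp : p.natDegree ≤ a) (hq : q.natDegree ≤ b) :
    (p * q).coeff (a + b) = p.coeff a * q.coeff b := by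
  rcases lt_or_eq_of_le hp with hp' | hp'
  · rw [Polynomial.coeff_eq_zero_of_natDegree_lt hp', zero_mul,
      Polynomial.coeff_eq_zero_of_natDegree_lt]
    calc (p*q).natDegree ≤ p.natDegree + q.natDegree := Polynomial.natDegree_mul_le
      _ < a + b := by omega
  · rcases lt_or_eq_of_le hq with hq' | hq'
    · rw [Polynomial.coeff_eq_zero_of_natDegree_lt hq', mul_zero,
        Polynomial.coeff_eq_zero_of_natDegree_lt]
      calc (p*q).natDegree ≤ p.natDegree + q.natDegree := Polynomial.natDegree_mul_le
        _ < a + b := by omega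
    · subst hp' hq'
      exact Polynomial.coeff_mul_degree_add_degree p q

lemma homogComp_of_isHomogeneous {S : MvPolynomial (Fin 2) k} {m : ℕ}
    (hS : S.IsHomogeneous m) : homogeneousComponent m S = S := by
  ext d
  rw [coeff_homogeneousComponent]
  split_ifs with h
  · rfl
  · exact (hS.coeff_eq_zero h).symm

lemma homogComp_ne_of_isHomogeneous {S : MvPolynomial (Fin 2) k} {m n : ℕ}
    (hS : S.IsHomogeneous m) (h : n ≠ m) : homogeneousComponent n S = 0 := by
  ext d
  rw [coeff_homogeneousComponent]
  split_ifs with hd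
  · exact hS.coeff_eq_zero (by rw [hd]; exact h)
  · simp

lemma sum_homogComp_le {p : MvPolynomial (Fin 2) k} {a : ℕ} (hp : p.totalDegree ≤ a) :
    ∑ i ∈ Finset.range (a+1), homogeneousComponent i p = p := by
  calc ∑ i ∈ Finset.range (a+1), homogeneousComponent i p
      = ∑ i ∈ Finset.range (p.totalDegree+1), homogeneousComponent i p := by
        symm
        apply Finset.sum_subset
        · intro x hx
          simp only [Finset.mem_range] at hx ⊢
          omega
        · intro x _ hx
          simp only [Finset.mem_range, not_lt] at hx
          exact homogeneousComponent_eq_zero _ p (by omega)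
    _ = p := MvPolynomial.sum_homogeneousComponent p

lemma homogComp_mul {p q : MvPolynomial (Fin 2) k} {a b : ℕ}
    (hp : p.totalDegree ≤ a) (hq : q.totalDegree ≤ b) :
    homogeneousComponent (a + b) (p * q)
      = homogeneousComponent a p * homogeneousComponent b q := by
  conv_lhs => rw [← sum_homogComp_le hp, ← sum_homogComp_le hq]
  rw [Finset.sum_mul_sum, map_sum]
  rw [Finset.sum_eq_single a]
  · rw [map_sum, Finset.sum_eq_single b]
    · exact homogComp_of_isHomogeneous
        ((homogeneousComponent_isHomogeneous a p).mul (homogeneousComponent_isHomogeneous b q))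
    · intro j hj hjb
      exact homogComp_ne_of_isHomogeneous
        ((homogeneousComponent_isHomogeneous a p).mul (homogeneousComponent_isHomogeneous j q))
        (by omega)
    · intro hb
      simp only [Finset.mem_range] at hb
      omega
  · intro i hi hia
    rw [map_sum, Finset.sum_eq_zero]
    intro j hj
    simp only [Finset.mem_range] at hi hj
    exact homogComp_ne_of_isHomogeneous
      ((homogeneousComponent_isHomogeneous i p).mul (homogeneousComponent_isHomogeneous j q))
      (by omega)
  · intro ha
    simp only [Finset.mem_range] at ha
    omega

lemma totalDegree_eq_sup_degree (p : MvPolynomial (Fin 2) k) :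
    p.totalDegree = p.support.sup fun d => d.degree := rfl

lemma top_ne_zero {p : MvPolynomial (Fin 2) k} (hp : p ≠ 0) :
    homogeneousComponent p.totalDegree p ≠ 0 := by
  obtain ⟨d, hd, hdeg⟩ := Finset.exists_mem_eq_sup p.support
    (support_nonempty.mpr hp) (fun d => d.degree)
  intro h0
  have hc : MvPolynomial.coeff d (homogeneousComponent p.totalDegree p)
      = MvPolynomial.coeff d p := by
    rw [coeff_homogeneousComponent, if_pos]
    rw [totalDegree_eq_sup_degree, hdeg]
  rw [h0] at hc
  exact (mem_support_iff.mp hd) (by simpa using hc.symm)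

lemma le_totalDegree_of_homogComp_ne {p : MvPolynomial (Fin 2) k} {n : ℕ}
    (h : homogeneousComponent n p ≠ 0) : n ≤ p.totalDegree := by
  by_contra hlt
  exact h (homogeneousComponent_eq_zero _ p (by omega))

lemma degree_support_eq {S : MvPolynomial (Fin 2) k} {m : ℕ} (hS : S.IsHomogeneous m)
    {d : Fin 2 →₀ ℕ} (hd : d ∈ S.support) : d.degree = m := by
  by_contra h
  exact (mem_support_iff.mp hd) (hS.coeff_eq_zero h)

lemma eval_smul_of_isHomogeneous {S : MvPolynomial (Fin 2) k} {m : ℕ}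
    (hS : S.IsHomogeneous m) (t : k) (u : Fin 2 → k) :
    MvPolynomial.eval (t • u) S = t ^ m * MvPolynomial.eval u S := by
  conv_lhs => rw [S.as_sum]
  conv_rhs => rw [S.as_sum]
  rw [map_sum, map_sum, Finset.mul_sum]
  apply Finset.sum_congr rfl
  intro d hd
  rw [MvPolynomial.eval_monomial, MvPolynomial.eval_monomial]
  have hprod : (d.prod fun i e => (t • u) i ^ e)
      = t ^ m * d.prod fun i e => u i ^ e := by
    rw [Finsupp.prod, Finsupp.prod]
    have h1 : ∀ i ∈ d.support, (t • u) i ^ d i = t ^ d i * u i ^ d i := by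
      intro i _; simp [mul_pow]
    rw [Finset.prod_congr rfl h1, Finset.prod_mul_distrib, Finset.prod_pow_eq_pow_sum]
    congr 2
    exact degree_support_eq hS hd
  rw [hprod]; ring

lemma fin2_degree (d : Fin 2 →₀ ℕ) : d.degree = d 0 + d 1 := by
  have : d.degree = ∑ i : Fin 2, d i := by
    rw [show d.degree = d.sum fun _ e => e from rfl]
    exact Finsupp.sum_fintype _ _ (fun i => rfl)
  rw [this, Fin.sum_univ_two]

lemma fin2_degree_one {d : Fin 2 →₀ ℕ} (h : d.degree = 1) :
    d = Finsupp.single 0 1 ∨ d = Finsupp.single 1 1 := by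
  have hsum : d 0 + d 1 = 1 := by rw [← fin2_degree]; exact h
  rcases Nat.eq_zero_or_pos (d 0) with h0 | h0
  · right
    ext i
    fin_cases i <;> simp [Finsupp.single_apply] <;> omega
  · left
    ext i
    fin_cases i <;> simp [Finsupp.single_apply] <;> omega

lemma isHomogeneous_one_struct {p : MvPolynomial (Fin 2) k} (hp : p.IsHomogeneous 1) :
    p = (MvPolynomial.coeff (Finsupp.single 0 1) p) • MvPolynomial.X 0
      + (MvPolynomial.coeff (Finsupp.single 1 1) p) • MvPolynomial.X 1 := by
  ext d
  rw [MvPolynomial.coeff_add, MvPolynomial.coeff_smul, MvPolynomial.coeff_smul,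
    coeff_X', coeff_X']
  by_cases hd : d.degree = 1
  · rcases fin2_degree_one hd with rfl | rfl
    · rw [if_pos rfl, if_neg]
      · simp
      · intro hcon
        have := DFunLike.congr_fun hcon (1 : Fin 2)
        simp [Finsupp.single_apply] at this
    · rw [if_neg, if_pos rfl]
      · simp
      · intro hcon
        have := DFunLike.congr_fun hcon (0 : Fin 2)
        simp [Finsupp.single_apply] at this
  · rw [hp.coeff_eq_zero hd, if_neg, if_neg]
    · simp
    · intro hcon
      rw [← hcon, fin2_degree] at hd
      simp [Finsupp.single_apply] at hd
    · intro hcon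
      rw [← hcon, fin2_degree] at hd
      simp [Finsupp.single_apply] at hd

lemma homogComp_pow {p : MvPolynomial (Fin 2) k} {D : ℕ} (hp : p.totalDegree ≤ D) (e : ℕ) :
    (p ^ e).totalDegree ≤ e * D ∧
      homogeneousComponent (e * D) (p ^ e) = (homogeneousComponent D p) ^ e := by
  induction e with
  | zero =>
      constructor
      · simp
      · simp only [pow_zero, zero_mul]
        exact homogComp_of_isHomogeneous (isHomogeneous_one _ _)
  | succ n ih =>
      constructor
      · calc (p ^ (n+1)).totalDegree = (p ^ n * p).totalDegree := by rw [pow_succ]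
          _ ≤ (p ^ n).totalDegree + p.totalDegree := totalDegree_mul _ _
          _ ≤ n * D + D := add_le_add ih.1 hp
          _ = (n+1) * D := by ring
      · rw [pow_succ, show (n+1) * D = n * D + D by ring,
          homogComp_mul ih.1 hp, ih.2, pow_succ]

lemma coeff_pow {p : k[X]} {D : ℕ} (hp : p.natDegree ≤ D) (e : ℕ) :
    (p ^ e).natDegree ≤ e * D ∧ (p ^ e).coeff (e * D) = (p.coeff D) ^ e := by
  induction e with
  | zero => constructor
            · simp
            · simp
  | succ n ih =>
      constructor
      · calc (p ^ (n+1)).natDegree = (p ^ n * p).natDegree := by rw [pow_succ]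
          _ ≤ (p ^ n).natDegree + p.natDegree := natDegree_mul_le
          _ ≤ n * D + D := add_le_add ih.1 hp
          _ = (n+1) * D := by ring
      · rw [pow_succ, show (n+1) * D = n * D + D by ring,
          coeff_mul_of_natDegree_le ih.1 hp, ih.2, pow_succ]

/-- key composition lemma, MvPolynomial target -/
lemma topcomp_M {q : Fin 2 → MvPolynomial (Fin 2) k} {D : ℕ} (hD : 1 ≤ D)
    (hq : ∀ i, (q i).totalDegree ≤ D) {P : MvPolynomial (Fin 2) k} {D' : ℕ}
    (hP : P.totalDegree ≤ D') :
    ((bind₁ q) P).totalDegree ≤ D' * D ∧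
      homogeneousComponent (D' * D) ((bind₁ q) P)
        = (bind₁ fun i => homogeneousComponent D (q i)) (homogeneousComponent D' P) := by
  have key : ∀ d ∈ P.support,
      ((bind₁ q) (monomial d (MvPolynomial.coeff d P))).totalDegree ≤ d.degree * D ∧
      homogeneousComponent (d.degree * D) ((bind₁ q) (monomial d (MvPolynomial.coeff d P)))
        = (bind₁ fun i => homogeneousComponent D (q i)) (monomial d (MvPolynomial.coeff d P)) := by
    intro d _
    rw [bind₁_monomial, bind₁_monomial]
    have hprod : ∀ s : Finset (Fin 2),
        (∏ i ∈ s, q i ^ d i).totalDegree ≤ (∑ i ∈ s, d i) * D ∧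
        homogeneousComponent ((∑ i ∈ s, d i) * D) (∏ i ∈ s, q i ^ d i)
          = ∏ i ∈ s, (homogeneousComponent D (q i)) ^ d i := by
      intro s
      induction s using Finset.induction with
      | empty =>
          constructor
          · simp
          · simp only [Finset.prod_empty, Finset.sum_empty, zero_mul]
            exact homogComp_of_isHomogeneous (isHomogeneous_one _ _)
      | insert _ _ hnotmem ih =>
          rename_i a s'
          constructor
          · rw [Finset.prod_insert hnotmem, Finset.sum_insert hnotmem]
            calc (q a ^ d a * ∏ i ∈ s', q i ^ d i).totalDegree
                ≤ (q a ^ d a).totalDegree + (∏ i ∈ s', q i ^ d i).totalDegree :=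
                  totalDegree_mul _ _
              _ ≤ d a * D + (∑ i ∈ s', d i) * D :=
                  add_le_add (homogComp_pow (hq a) (d a)).1 ih.1
              _ = (d a + ∑ i ∈ s', d i) * D := by ring
          · rw [Finset.prod_insert hnotmem, Finset.sum_insert hnotmem,
              Finset.prod_insert hnotmem,
              show (d a + ∑ i ∈ s', d i) * D = d a * D + (∑ i ∈ s', d i) * D by ring,
              homogComp_mul (homogComp_pow (hq a) (d a)).1 ih.1,
              (homogComp_pow (hq a) (d a)).2, ih.2]
    have hsum : ∑ i ∈ d.support, d i = d.degree := rfl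
    constructor
    · calc (MvPolynomial.C (MvPolynomial.coeff d P) * ∏ i ∈ d.support, q i ^ d i).totalDegree
          ≤ (MvPolynomial.C (MvPolynomial.coeff d P)).totalDegree
            + (∏ i ∈ d.support, q i ^ d i).totalDegree := totalDegree_mul _ _
        _ ≤ 0 + (∑ i ∈ d.support, d i) * D := add_le_add (by simp) (hprod d.support).1
        _ = d.degree * D := by rw [hsum]; ring
    · rw [← MvPolynomial.smul_eq_C_mul, ← MvPolynomial.smul_eq_C_mul, map_smul, ← hsum, (hprod d.support).2]
  constructor
  · conv_lhs => rw [P.as_sum]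
    rw [map_sum]
    apply (totalDegree_finset_sum _ _).trans
    apply Finset.sup_le
    intro d hd
    exact le_trans (key d hd).1
      (Nat.mul_le_mul_right D (le_trans (le_totalDegree hd) hP))
  · conv_lhs => rw [P.as_sum]
    conv_rhs => rw [P.as_sum]
    rw [map_sum, map_sum, map_sum, map_sum]
    apply Finset.sum_congr rfl
    intro d hd
    by_cases hdd : d.degree = D'
    · rw [homogComp_of_isHomogeneous (isHomogeneous_monomial _ hdd)]
      have h2 := (key d hd).2
      rw [hdd] at h2
      exact h2
    · rw [homogComp_ne_of_isHomogeneous (isHomogeneous_monomial _ rfl) (Ne.symm hdd), map_zero]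
      apply homogeneousComponent_eq_zero
      calc ((bind₁ q) ((monomial d) (MvPolynomial.coeff d P))).totalDegree
          ≤ d.degree * D := (key d hd).1
        _ < D' * D := by
            have hle : d.degree ≤ D' := le_trans (le_totalDegree hd) hP
            have : d.degree < D' := lt_of_le_of_ne hle hdd
            exact Nat.mul_lt_mul_of_lt_of_le this (le_refl D) hD

/-- key composition lemma, Polynomial target -/
lemma topcomp_P {q : Fin 2 → k[X]} {D : ℕ} (hD : 1 ≤ D)
    (hq : ∀ i, (q i).natDegree ≤ D) {P : MvPolynomial (Fin 2) k} {D' : ℕ}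
    (hP : P.totalDegree ≤ D') :
    ((MvPolynomial.aeval q) P).natDegree ≤ D' * D ∧
      ((MvPolynomial.aeval q) P).coeff (D' * D)
        = MvPolynomial.eval (fun i => (q i).coeff D) (homogeneousComponent D' P) := by
  have key : ∀ d ∈ P.support,
      ((MvPolynomial.aeval q) ((monomial d) (MvPolynomial.coeff d P))).natDegree ≤ d.degree * D ∧
      ((MvPolynomial.aeval q) ((monomial d) (MvPolynomial.coeff d P))).coeff (d.degree * D)
        = (MvPolynomial.coeff d P) * ∏ i ∈ d.support, ((q i).coeff D) ^ d i := by
    intro d _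
    rw [MvPolynomial.aeval_monomial]
    have hprod : ∀ s : Finset (Fin 2),
        (∏ i ∈ s, q i ^ d i).natDegree ≤ (∑ i ∈ s, d i) * D ∧
        (∏ i ∈ s, q i ^ d i).coeff ((∑ i ∈ s, d i) * D)
          = ∏ i ∈ s, ((q i).coeff D) ^ d i := by
      intro s
      induction s using Finset.induction with
      | empty => constructor
                 · simp
                 · simp
      | insert _ _ hnotmem ih =>
          rename_i a s'
          constructor
          · rw [Finset.prod_insert hnotmem, Finset.sum_insert hnotmem]
            calc (q a ^ d a * ∏ i ∈ s', q i ^ d i).natDegree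
                ≤ (q a ^ d a).natDegree + (∏ i ∈ s', q i ^ d i).natDegree := natDegree_mul_le
              _ ≤ d a * D + (∑ i ∈ s', d i) * D :=
                  add_le_add (coeff_pow (hq a) (d a)).1 ih.1
              _ = (d a + ∑ i ∈ s', d i) * D := by ring
          · rw [Finset.prod_insert hnotmem, Finset.sum_insert hnotmem,
              Finset.prod_insert hnotmem,
              show (d a + ∑ i ∈ s', d i) * D = d a * D + (∑ i ∈ s', d i) * D by ring,
              coeff_mul_of_natDegree_le (coeff_pow (hq a) (d a)).1 ih.1,
              (coeff_pow (hq a) (d a)).2, ih.2]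
    have hsum : ∑ i ∈ d.support, d i = d.degree := rfl
    have halg : (algebraMap k k[X]) (MvPolynomial.coeff d P)
        = Polynomial.C (MvPolynomial.coeff d P) := rfl
    have hfp : (d.prod fun i e => q i ^ e) = ∏ i ∈ d.support, q i ^ d i := rfl
    rw [halg, hfp]
    constructor
    · calc (Polynomial.C (MvPolynomial.coeff d P) * ∏ i ∈ d.support, q i ^ d i).natDegree
          ≤ (Polynomial.C (MvPolynomial.coeff d P)).natDegree
            + (∏ i ∈ d.support, q i ^ d i).natDegree := natDegree_mul_le
        _ ≤ 0 + (∑ i ∈ d.support, d i) * D := add_le_add (by simp) (hprod d.support).1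
        _ = d.degree * D := by rw [hsum]; ring
    · rw [Polynomial.coeff_C_mul, ← hsum, (hprod d.support).2]
  constructor
  · conv_lhs => rw [P.as_sum]
    rw [map_sum]
    apply Polynomial.natDegree_sum_le_of_forall_le
    intro d hd
    exact le_trans (key d hd).1
      (Nat.mul_le_mul_right D (le_trans (le_totalDegree hd) hP))
  · conv_lhs => rw [P.as_sum]
    conv_rhs => rw [P.as_sum]
    rw [map_sum, map_sum, map_sum, Polynomial.finset_sum_coeff]
    apply Finset.sum_congr rfl
    intro d hd
    by_cases hdd : d.degree = D'
    · rw [homogComp_of_isHomogeneous (isHomogeneous_monomial _ hdd)]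
      have h2 := (key d hd).2
      rw [hdd] at h2
      rw [h2, MvPolynomial.eval_monomial]
      rfl
    · rw [homogComp_ne_of_isHomogeneous (isHomogeneous_monomial _ rfl) (Ne.symm hdd), map_zero]
      apply Polynomial.coeff_eq_zero_of_natDegree_lt
      calc ((MvPolynomial.aeval q) ((monomial d) (MvPolynomial.coeff d P))).natDegree
          ≤ d.degree * D := (key d hd).1
        _ < D' * D := by
            have hle : d.degree ≤ D' := le_trans (le_totalDegree hd) hP
            have : d.degree < D' := lt_of_le_of_ne hle hdd
            exact Nat.mul_lt_mul_of_lt_of_le this (le_refl D) hD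

/-- substituting proportional polynomials into a homogeneous polynomial -/
lemma bind₁_smul_pow {R : MvPolynomial (Fin 2) k} {m : ℕ} (hR : R.IsHomogeneous m)
    (cv : Fin 2 → k) (p : MvPolynomial (Fin 2) k) :
    (bind₁ fun i => cv i • p) R = (MvPolynomial.eval cv R) • p ^ m := by
  conv_lhs => rw [R.as_sum]
  conv_rhs => rw [R.as_sum]
  rw [map_sum, map_sum, Finset.sum_smul]
  apply Finset.sum_congr rfl
  intro d hd
  rw [bind₁_monomial, MvPolynomial.eval_monomial]
  have h1 : ∀ i ∈ d.support, (cv i • p) ^ d i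
      = MvPolynomial.C (cv i ^ d i) * p ^ d i := by
    intro i _
    rw [_root_.smul_pow, MvPolynomial.smul_eq_C_mul]
  rw [Finset.prod_congr rfl h1, Finset.prod_mul_distrib, Finset.prod_pow_eq_pow_sum]
  have h2 : ∑ i ∈ d.support, d i = m := degree_support_eq hR hd
  rw [h2, MvPolynomial.smul_eq_C_mul]
  have h3 : (d.prod fun i e => cv i ^ e) = ∏ i ∈ d.support, cv i ^ d i := rfl
  rw [h3, map_mul, ← map_prod]
  ring

noncomputable def dehom : MvPolynomial (Fin 2) k →ₐ[k] k[X] :=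
  MvPolynomial.aeval ![Polynomial.X, 1]

lemma dehom_monomial (d : Fin 2 →₀ ℕ) (c : k) :
    dehom (monomial d c) = Polynomial.C c * Polynomial.X ^ (d 0) := by
  rw [dehom, MvPolynomial.aeval_monomial]
  congr 1
  rw [Finsupp.prod_fintype _ _ (fun i => pow_zero _), Fin.prod_univ_two]
  simp

lemma dehom_natDegree_le {S : MvPolynomial (Fin 2) k} {m : ℕ} (hS : S.IsHomogeneous m) :
    (dehom S).natDegree ≤ m := by
  have := (topcomp_P (k := k) (q := ![Polynomial.X, 1]) (D := 1) le_rfl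
    (fun i => by fin_cases i <;> simp) (P := S) (D' := m) hS.totalDegree_le).1
  simpa [dehom] using this

lemma dehom_injective_on_homog {S : MvPolynomial (Fin 2) k} {m : ℕ}
    (hS : S.IsHomogeneous m) (h : dehom S = 0) : S = 0 := by
  by_contra hS0
  obtain ⟨d, hd⟩ := support_nonempty.mpr hS0
  have hcoeff : (dehom S).coeff (d 0) = MvPolynomial.coeff d S := by
    conv_lhs => rw [S.as_sum]
    rw [map_sum, Polynomial.finset_sum_coeff]
    rw [Finset.sum_eq_single d]
    · rw [dehom_monomial, Polynomial.coeff_C_mul, Polynomial.coeff_X_pow, if_pos rfl,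
        mul_one]
    · intro d' hd' hne
      rw [dehom_monomial, Polynomial.coeff_C_mul, Polynomial.coeff_X_pow]
      rw [if_neg, mul_zero]
      intro heq
      apply hne
      have h1 : d' 0 + d' 1 = d 0 + d 1 := by
        rw [← fin2_degree, ← fin2_degree, degree_support_eq hS hd',
          degree_support_eq hS hd]
      ext i
      fin_cases i
      · exact heq.symm
      · simpa [heq] using h1
    · intro hdn
      exact absurd hd hdn
  rw [h] at hcoeff
  exact (mem_support_iff.mp hd) (by simpa using hcoeff.symm)

lemma multiset_prod_homog (s : Multiset k) :
    ((s.map fun t => MvPolynomial.X 0 - MvPolynomial.C t * MvPolynomial.X 1).prod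
      : MvPolynomial (Fin 2) k).IsHomogeneous (Multiset.card s) := by
  induction s using Multiset.induction_on with
  | empty => simpa using isHomogeneous_one (Fin 2) k
  | cons t s ih =>
      rw [Multiset.map_cons, Multiset.prod_cons, Multiset.card_cons]
      have h1 : ((MvPolynomial.X 0 - MvPolynomial.C t * MvPolynomial.X 1)
          : MvPolynomial (Fin 2) k).IsHomogeneous 1 := by
        apply (isHomogeneous_X k 0).sub
        simpa using (isHomogeneous_C (Fin 2) t).mul (isHomogeneous_X k 1)
      simpa [add_comm] using h1.mul ih

lemma split_dependence [IsAlgClosed k] {m : ℕ} (hm : 1 ≤ m)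
    {R : MvPolynomial (Fin 2) k} (hR : R.IsHomogeneous m) (hR0 : R ≠ 0)
    (A B : MvPolynomial (Fin 2) k)
    (h0 : (MvPolynomial.aeval ![A, B]) R = 0) :
    ∃ a b : k, (a ≠ 0 ∨ b ≠ 0) ∧ a • A = b • B := by
  set P : k[X] := dehom R with hP
  have hP0 : P ≠ 0 := fun h => hR0 (dehom_injective_on_homog hR h)
  have hcard : (P.roots).card = P.natDegree :=
    (Polynomial.splits_iff_card_roots).mp (IsAlgClosed.splits P)
  have hfact := Polynomial.C_leadingCoeff_mul_prod_multiset_X_sub_C hcard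
  have hDple : P.natDegree ≤ m := dehom_natDegree_le hR
  set RR : MvPolynomial (Fin 2) k :=
    MvPolynomial.C P.leadingCoeff * (MvPolynomial.X 1) ^ (m - P.natDegree) *
      (P.roots.map fun t => MvPolynomial.X 0 - MvPolynomial.C t * MvPolynomial.X 1).prod
    with hRR
  have hRRhom : RR.IsHomogeneous m := by
    have h1 := ((isHomogeneous_C (Fin 2) P.leadingCoeff).mul
      ((isHomogeneous_X k 1).pow (m - P.natDegree))).mul (multiset_prod_homog P.roots)
    rw [hcard] at h1
    have hEq : 0 + 1 * (m - P.natDegree) + P.natDegree = m := by omega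
    rw [hEq] at h1
    exact h1
  have hdehomRR : dehom RR = P := by
    rw [hRR]
    rw [map_mul, map_mul, map_pow]
    have e1 : dehom (MvPolynomial.C P.leadingCoeff : MvPolynomial (Fin 2) k) = Polynomial.C P.leadingCoeff := by
      simp [dehom]
    have e2 : dehom (MvPolynomial.X 1 : MvPolynomial (Fin 2) k) = 1 := by
      simp [dehom, MvPolynomial.aeval_X]
    have e3 : dehom (P.roots.map fun t =>
        MvPolynomial.X 0 - MvPolynomial.C t * MvPolynomial.X 1).prod
        = (P.roots.map fun t => Polynomial.X - Polynomial.C t).prod := by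
      rw [map_multiset_prod]
      congr 1
      rw [Multiset.map_map]
      apply Multiset.map_congr rfl
      intro t _
      simp [dehom]
    rw [e1, e2, e3, one_pow, mul_one]
    exact hfact
  have hReq : R = RR := by
    have hsub : (R - RR).IsHomogeneous m := hR.sub hRRhom
    have : dehom (R - RR) = 0 := by rw [map_sub, hdehomRR, ← hP, sub_self]
    exact sub_eq_zero.mp (dehom_injective_on_homog hsub this)
  have h0' : (MvPolynomial.C P.leadingCoeff : MvPolynomial (Fin 2) k) *
      B ^ (m - P.natDegree) *
      (P.roots.map fun t => A - MvPolynomial.C t * B).prod = 0 := by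
    rw [hReq, hRR] at h0
    simpa [map_multiset_prod, Multiset.map_map, MvPolynomial.aeval_X,
      Function.comp] using h0
  rcases mul_eq_zero.mp h0' with h1 | h2
  · rcases mul_eq_zero.mp h1 with hc | hpow
    · exfalso
      apply Polynomial.leadingCoeff_ne_zero.mpr hP0
      have := (MvPolynomial.C_eq_zero (σ := Fin 2)).mp hc
      exact this
    · have hB0 : B = 0 := by
        rcases Nat.eq_zero_or_pos (m - P.natDegree) with hz | hpos
        · rw [hz, pow_zero] at hpow; exact absurd hpow one_ne_zero
        · exact (pow_eq_zero_iff (by omega)).mp hpow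
      exact ⟨0, 1, Or.inr one_ne_zero, by simp [hB0]⟩
  · obtain ⟨x, hmem, hft⟩ := Multiset.mem_map.mp (Multiset.prod_eq_zero_iff.mp h2)
    refine ⟨1, x, Or.inl one_ne_zero, ?_⟩
    rw [one_smul, MvPolynomial.smul_eq_C_mul]
    exact sub_eq_zero.mp hft

lemma aeval_mk (r q : k[X]) (p : k[X]) :
    Polynomial.aeval (AdjoinRoot.mk r q) p = AdjoinRoot.mk r (Polynomial.aeval q p) := by
  rw [Polynomial.aeval_def, Polynomial.aeval_def, AdjoinRoot.algebraMap_eq, Polynomial.algebraMap_eq]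
  rw [show AdjoinRoot.of r = (AdjoinRoot.mk r).comp Polynomial.C from rfl]
  exact (Polynomial.hom_eval₂ p Polynomial.C (AdjoinRoot.mk r) q).symm

lemma comp_aeval_apply {A B : Type*} [CommSemiring A] [CommSemiring B] [Algebra k A]
    [Algebra k B] (f : A →ₐ[k] B) (v : Fin 2 → A) (P : MvPolynomial (Fin 2) k) :
    f ((MvPolynomial.aeval v) P) = (MvPolynomial.aeval fun i => f (v i)) P := by
  rw [← MvPolynomial.comp_aeval]; rfl

lemma totalDegree_mul_eq {p q : MvPolynomial (Fin 2) k} (hp : p ≠ 0) (hq : q ≠ 0) :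
    (p * q).totalDegree = p.totalDegree + q.totalDegree := by
  apply le_antisymm (totalDegree_mul p q)
  have h := homogComp_mul (le_refl p.totalDegree) (le_refl q.totalDegree)
  exact le_totalDegree_of_homogComp_ne
    (h ▸ mul_ne_zero (top_ne_zero hp) (top_ne_zero hq))

/-- the linear form vanishing on direction `u` -/
noncomputable def ell (u : Fin 2 → k) : MvPolynomial (Fin 2) k :=
  (u 1) • MvPolynomial.X 0 + (-(u 0)) • MvPolynomial.X 1

lemma ell_isHomogeneous (u : Fin 2 → k) : (ell u).IsHomogeneous 1 := by
  apply MvPolynomial.IsHomogeneous.add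
  · rw [MvPolynomial.smul_eq_C_mul]
    simpa using (isHomogeneous_C (Fin 2) (u 1)).mul (isHomogeneous_X k 0)
  · rw [MvPolynomial.smul_eq_C_mul]
    simpa using (isHomogeneous_C (Fin 2) (-(u 0))).mul (isHomogeneous_X k 1)

lemma ell_ne_zero {u : Fin 2 → k} (hu : u ≠ 0) : ell u ≠ 0 := by
  intro h
  apply hu
  have h0 := congrArg (MvPolynomial.eval ![(1:k), 0]) h
  have h1 := congrArg (MvPolynomial.eval ![(0:k), 1]) h
  simp only [ell, map_add, MvPolynomial.smul_eval, MvPolynomial.eval_X, map_zero] at h0 h1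
  funext i
  fin_cases i
  · show u 0 = 0
    simpa using h1
  · show u 1 = 0
    simpa using h0

lemma ell_totalDegree {u : Fin 2 → k} (hu : u ≠ 0) : (ell u).totalDegree = 1 :=
  (ell_isHomogeneous u).totalDegree (ell_ne_zero hu)

/-- substitution along the line through the origin with direction `u` -/
noncomputable def lineSub (u : Fin 2 → k) : Fin 2 → k[X] :=
  ![(u 0) • Polynomial.X, (u 1) • Polynomial.X]

lemma lineSub_natDegree_le (u : Fin 2 → k) (i : Fin 2) : ((lineSub u) i).natDegree ≤ 1 := by
  fin_cases i
  · show ((u 0) • (Polynomial.X : k[X])).natDegree ≤ 1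
    exact (natDegree_smul_le _ _).trans (by rw [Polynomial.natDegree_X])
  · show ((u 1) • (Polynomial.X : k[X])).natDegree ≤ 1
    exact (natDegree_smul_le _ _).trans (by rw [Polynomial.natDegree_X])

lemma lineSub_coeff_one (u : Fin 2 → k) : (fun i => ((lineSub u) i).coeff 1) = u := by
  funext i
  fin_cases i
  · show ((u 0) • (Polynomial.X : k[X])).coeff 1 = u 0
    rw [Polynomial.coeff_smul, Polynomial.coeff_X_one, smul_eq_mul, mul_one]
  · show ((u 1) • (Polynomial.X : k[X])).coeff 1 = u 1
    rw [Polynomial.coeff_smul, Polynomial.coeff_X_one, smul_eq_mul, mul_one]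

lemma exists_mu {u : Fin 2 → k} (hu : u ≠ 0) :
    ∃ (mu : MvPolynomial (Fin 2) k) (vv : Fin 2 → k),
      (∀ i, MvPolynomial.X i - (u i) • mu = vv i • ell u) ∧
      (MvPolynomial.aeval (lineSub u)) mu = Polynomial.X := by
  rcases vec_ne_zero hu with h0 | h1
  · refine ⟨(u 0)⁻¹ • MvPolynomial.X 0, ![0, -(u 0)⁻¹], fun i => ?_, ?_⟩
    · have hC : (MvPolynomial.C ((u 0)⁻¹) * MvPolynomial.C (u 0) : MvPolynomial (Fin 2) k) = 1 := by
        rw [← map_mul, inv_mul_cancel₀ h0, map_one]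
      fin_cases i
      · show MvPolynomial.X 0 - u 0 • ((u 0)⁻¹ • MvPolynomial.X 0) = (0:k) • ell u
        rw [smul_smul, mul_inv_cancel₀ h0, one_smul, sub_self, zero_smul]
      · show MvPolynomial.X 1 - u 1 • ((u 0)⁻¹ • MvPolynomial.X 0)
            = (-(u 0)⁻¹) • ell u
        rw [ell]
        simp only [MvPolynomial.smul_eq_C_mul, map_neg]
        linear_combination (-(MvPolynomial.X 1 : MvPolynomial (Fin 2) k)) * hC
    · rw [map_smul, MvPolynomial.aeval_X]
      show (u 0)⁻¹ • ((lineSub u) 0) = Polynomial.X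
      rw [show (lineSub u) 0 = (u 0) • Polynomial.X from rfl, smul_smul,
        inv_mul_cancel₀ h0, one_smul]
  · refine ⟨(u 1)⁻¹ • MvPolynomial.X 1, ![(u 1)⁻¹, 0], fun i => ?_, ?_⟩
    · have hC : (MvPolynomial.C ((u 1)⁻¹) * MvPolynomial.C (u 1) : MvPolynomial (Fin 2) k) = 1 := by
        rw [← map_mul, inv_mul_cancel₀ h1, map_one]
      fin_cases i
      · show MvPolynomial.X 0 - u 0 • ((u 1)⁻¹ • MvPolynomial.X 1) = ((u 1)⁻¹) • ell u
        rw [ell]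
        simp only [MvPolynomial.smul_eq_C_mul, map_neg]
        linear_combination (-(MvPolynomial.X 0 : MvPolynomial (Fin 2) k)) * hC
      · show MvPolynomial.X 1 - u 1 • ((u 1)⁻¹ • MvPolynomial.X 1) = (0:k) • ell u
        rw [smul_smul, mul_inv_cancel₀ h1, one_smul, sub_self, zero_smul]
    · rw [map_smul, MvPolynomial.aeval_X]
      show (u 1)⁻¹ • ((lineSub u) 1) = Polynomial.X
      rw [show (lineSub u) 1 = (u 1) • Polynomial.X from rfl, smul_smul,
        inv_mul_cancel₀ h1, one_smul]

lemma fun_fin2 {α : Type*} (f : Fin 2 → α) : f = ![f 0, f 1] := by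
  funext i; fin_cases i <;> rfl

lemma dim_eq {g h : MvPolynomial (Fin 2) k} {φ ψ : k[X]}
    (h1 : (MvPolynomial.aeval ![φ, ψ]) g = 0)
    (h2 : (MvPolynomial.aeval ![φ, ψ]) h = Polynomial.X)
    (h3φ : ∃ w0, Polynomial.aeval h φ = MvPolynomial.X 0 + g * w0)
    (h3ψ : ∃ w1, Polynomial.aeval h ψ = MvPolynomial.X 1 + g * w1)
    {u : Fin 2 → k} (hu : u ≠ 0)
    (hE : (MvPolynomial.aeval ![φ, ψ]) (ell u) ≠ 0)
    (hg : (MvPolynomial.aeval (lineSub u)) g ≠ 0) :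
    ((MvPolynomial.aeval ![φ, ψ]) (ell u)).natDegree
      = ((MvPolynomial.aeval (lineSub u)) g).natDegree := by
  obtain ⟨mu, vv, hmu1, hmu2⟩ := exists_mu hu
  obtain ⟨w0, hw0⟩ := h3φ
  obtain ⟨w1, hw1⟩ := h3ψ
  set Θ : MvPolynomial (Fin 2) k →ₐ[k] k[X] := MvPolynomial.aeval ![φ, ψ] with hTdef
  set ρ : MvPolynomial (Fin 2) k →ₐ[k] k[X] := MvPolynomial.aeval (lineSub u) with hRdef
  set E : k[X] := Θ (ell u) with hEdef
  set G : k[X] := ρ g with hGdef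
  set σ : k[X] := ρ h with hsdef
  set τ : k[X] := Θ mu with htdef
  have hφσ : Polynomial.aeval σ φ = (u 0) • Polynomial.X + G * ρ w0 := by
    have hc := congrArg ρ hw0
    rw [← Polynomial.aeval_algHom_apply ρ h φ] at hc
    rw [hc, map_add, map_mul, MvPolynomial.aeval_X]
    rfl
  have hψσ : Polynomial.aeval σ ψ = (u 1) • Polynomial.X + G * ρ w1 := by
    have hc := congrArg ρ hw1
    rw [← Polynomial.aeval_algHom_apply ρ h ψ] at hc
    rw [hc, map_add, map_mul, MvPolynomial.aeval_X]
    rfl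
  have hmodG : ∀ P : MvPolynomial (Fin 2) k,
      G ∣ (MvPolynomial.aeval ![Polynomial.aeval σ φ, Polynomial.aeval σ ψ]) P
        - (MvPolynomial.aeval (lineSub u)) P := by
    intro P
    have := dvd_aeval_sub (S := k[X]) G
      ![Polynomial.aeval σ φ, Polynomial.aeval σ ψ] (lineSub u) ?_ P
    · exact this
    · intro i
      fin_cases i
      · show G ∣ Polynomial.aeval σ φ - (u 0) • Polynomial.X
        rw [hφσ]
        exact ⟨ρ w0, by ring⟩
      · show G ∣ Polynomial.aeval σ ψ - (u 1) • Polynomial.X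
        rw [hψσ]
        exact ⟨ρ w1, by ring⟩
  have hmodE : ∀ P : MvPolynomial (Fin 2) k,
      E ∣ (MvPolynomial.aeval ![(u 0) • τ, (u 1) • τ]) P - Θ P := by
    intro P
    have := dvd_aeval_sub (S := k[X]) E
      ![(u 0) • τ, (u 1) • τ] ![φ, ψ] ?_ P
    · exact this
    · intro i
      have key : ∀ j : Fin 2, (u j) • τ - Θ (MvPolynomial.X j)
          = (-(vv j)) • E := by
        intro j
        have hc := congrArg Θ (hmu1 j)
        rw [map_sub, map_smul, map_smul] at hc
        rw [← hEdef] at hc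
        have : (u j) • τ - Θ (MvPolynomial.X j) = -(Θ (MvPolynomial.X j) - (u j) • Θ mu) := by
          rw [htdef]; ring
        rw [this, hc, neg_smul]
      fin_cases i
      · show E ∣ (u 0) • τ - φ
        have := key 0
        rw [show Θ (MvPolynomial.X 0) = φ by rw [hTdef, MvPolynomial.aeval_X]; rfl] at this
        rw [this, neg_smul, Polynomial.smul_eq_C_mul]
        exact ⟨-(Polynomial.C (vv 0)), by ring⟩
      · show E ∣ (u 1) • τ - ψ
        have := key 1
        rw [show Θ (MvPolynomial.X 1) = ψ by rw [hTdef, MvPolynomial.aeval_X]; rfl] at this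
        rw [this, neg_smul, Polynomial.smul_eq_C_mul]
        exact ⟨-(Polynomial.C (vv 1)), by ring⟩
  have hrhoell : ρ (ell u) = 0 := by
    rw [hRdef, ell, map_add, map_smul, map_smul, MvPolynomial.aeval_X, MvPolynomial.aeval_X]
    show (u 1) • ((u 0) • Polynomial.X) + (-(u 0)) • ((u 1) • Polynomial.X) = 0
    rw [smul_smul, smul_smul]
    rw [show u 1 * u 0 = u 0 * u 1 by ring]
    rw [neg_mul, neg_smul, add_neg_cancel]
  have hcompσ : ∀ P : MvPolynomial (Fin 2) k, Polynomial.aeval σ (Θ P)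
      = (MvPolynomial.aeval ![Polynomial.aeval σ φ, Polynomial.aeval σ ψ]) P := by
    intro P
    rw [hTdef, comp_aeval_apply (Polynomial.aeval σ) ![φ, ψ] P]
    have hfe : (fun i => (Polynomial.aeval σ) (![φ, ψ] i))
        = ![Polynomial.aeval σ φ, Polynomial.aeval σ ψ] := by
      funext i; fin_cases i <;> rfl
    rw [hfe]
  have hcompτ : ∀ P : MvPolynomial (Fin 2) k, Polynomial.aeval τ (ρ P)
      = (MvPolynomial.aeval ![(u 0) • τ, (u 1) • τ]) P := by
    intro P
    rw [hRdef, comp_aeval_apply (Polynomial.aeval τ) (lineSub u) P]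
    have hfe : (fun i => (Polynomial.aeval τ) (lineSub u i))
        = ![(u 0) • τ, (u 1) • τ] := by
      funext i
      fin_cases i
      · show Polynomial.aeval τ ((u 0) • Polynomial.X) = (u 0) • τ
        rw [map_smul, Polynomial.aeval_X]
      · show Polynomial.aeval τ ((u 1) • Polynomial.X) = (u 1) • τ
        rw [map_smul, Polynomial.aeval_X]
    rw [hfe]
  have cA : Polynomial.aeval (AdjoinRoot.mk G σ) E = 0 := by
    rw [aeval_mk, AdjoinRoot.mk_eq_zero]
    have hd := hmodG (ell u)
    rw [← hcompσ (ell u), ← hRdef, hrhoell, sub_zero] at hd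
    rw [hEdef]
    exact hd
  have cB : Polynomial.aeval (AdjoinRoot.mk E τ) G = 0 := by
    rw [aeval_mk, AdjoinRoot.mk_eq_zero]
    have hd := hmodE g
    rw [← hcompτ g] at hd
    rw [show Θ g = 0 from h1, sub_zero] at hd
    rw [hGdef]
    exact hd
  set A : AdjoinRoot E →ₐ[k] AdjoinRoot G := AdjoinRoot.liftAlgHom E (Algebra.ofId k _) (AdjoinRoot.mk G σ)
    (show Polynomial.eval₂ (↑(Algebra.ofId k (AdjoinRoot G))) (AdjoinRoot.mk G σ) E = 0 from cA)
    with hAdef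
  set B : AdjoinRoot G →ₐ[k] AdjoinRoot E := AdjoinRoot.liftAlgHom G (Algebra.ofId k _) (AdjoinRoot.mk E τ)
    (show Polynomial.eval₂ (↑(Algebra.ofId k (AdjoinRoot E))) (AdjoinRoot.mk E τ) G = 0 from cB)
    with hBdef
  have hBA : B.comp A = AlgHom.id k (AdjoinRoot E) := by
    apply AdjoinRoot.algHom_ext
    rw [AlgHom.comp_apply, AlgHom.id_apply, hAdef, AdjoinRoot.liftAlgHom_root, hBdef,
      AdjoinRoot.liftAlgHom_mk, show ∀ (x : AdjoinRoot E) (p : k[X]), Polynomial.eval₂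
        ((Algebra.ofId k (AdjoinRoot E) : k →+* AdjoinRoot E)) x p
        = Polynomial.aeval x p from fun _ _ => rfl, aeval_mk, ← AdjoinRoot.mk_X, AdjoinRoot.mk_eq_mk]
    have hd := hmodE h
    rw [show Θ h = Polynomial.X from h2] at hd
    rw [hsdef, hcompτ h]
    exact hd
  have hAB : A.comp B = AlgHom.id k (AdjoinRoot G) := by
    apply AdjoinRoot.algHom_ext
    rw [AlgHom.comp_apply, AlgHom.id_apply, hBdef, AdjoinRoot.liftAlgHom_root, hAdef,
      AdjoinRoot.liftAlgHom_mk, show ∀ (x : AdjoinRoot G) (p : k[X]), Polynomial.eval₂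
        ((Algebra.ofId k (AdjoinRoot G) : k →+* AdjoinRoot G)) x p
        = Polynomial.aeval x p from fun _ _ => rfl, aeval_mk, ← AdjoinRoot.mk_X, AdjoinRoot.mk_eq_mk]
    have hd := hmodG mu
    rw [← hcompσ mu, ← hRdef] at hd
    have hmu2' : ρ mu = Polynomial.X := hmu2
    rw [hmu2'] at hd
    exact hd
  have equiv : AdjoinRoot E ≃ₐ[k] AdjoinRoot G := AlgEquiv.ofAlgHom A B hAB hBA
  have hfr : Module.finrank k (AdjoinRoot E) = Module.finrank k (AdjoinRoot G) :=
    (AlgEquiv.toLinearEquiv equiv).finrank_eq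
  rw [PowerBasis.finrank (AdjoinRoot.powerBasis hE), AdjoinRoot.powerBasis_dim,
    PowerBasis.finrank (AdjoinRoot.powerBasis hg), AdjoinRoot.powerBasis_dim] at hfr
  exact hfr

lemma aeval_consts (vals : Fin 2 → k) (p : MvPolynomial (Fin 2) k) :
    (MvPolynomial.aeval (fun i => Polynomial.C (vals i) : Fin 2 → k[X])) p
      = Polynomial.C (MvPolynomial.eval vals p) := by
  induction p using MvPolynomial.induction_on with
  | C c => rw [MvPolynomial.aeval_C, MvPolynomial.eval_C]; rfl
  | add p q hp hq => rw [map_add, map_add, hp, hq, map_add]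
  | mul_X p i hp =>
      rw [map_mul, map_mul, MvPolynomial.aeval_X, MvPolynomial.eval_X, hp, map_mul]

lemma curve_lemma [IsAlgClosed k] {g h : MvPolynomial (Fin 2) k} {D : ℕ}
    (hD : 2 ≤ D) (hgD : g.totalDegree = D)
    {φ ψ : k[X]}
    (h1 : (MvPolynomial.aeval ![φ, ψ]) g = 0)
    (h2 : (MvPolynomial.aeval ![φ, ψ]) h = Polynomial.X)
    (h3φ : ∃ w0, Polynomial.aeval h φ = MvPolynomial.X 0 + g * w0)
    (h3ψ : ∃ w1, Polynomial.aeval h ψ = MvPolynomial.X 1 + g * w1) :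
    ∃ w : Fin 2 → k, w ≠ 0 ∧ ∀ u : Fin 2 → k, u ≠ 0 →
      MvPolynomial.eval u (homogeneousComponent D g) = 0 → ∃ lam : k, u = lam • w := by
  have hg0 : g ≠ 0 := by
    intro hcon
    rw [hcon, totalDegree_zero] at hgD
    omega
  set N : ℕ := max φ.natDegree ψ.natDegree with hN
  set w : Fin 2 → k := ![φ.coeff N, ψ.coeff N] with hw
  have hN1 : 1 ≤ N := by
    by_contra hcon
    push_neg at hcon
    have hφC := Polynomial.eq_C_of_natDegree_le_zero
      (show φ.natDegree ≤ 0 by omega)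
    have hψC := Polynomial.eq_C_of_natDegree_le_zero
      (show ψ.natDegree ≤ 0 by omega)
    have hcst : (MvPolynomial.aeval ![φ, ψ]) h
        = Polynomial.C (MvPolynomial.eval ![φ.coeff 0, ψ.coeff 0] h) := by
      rw [show (![φ, ψ] : Fin 2 → k[X])
          = fun i => Polynomial.C ((![φ.coeff 0, ψ.coeff 0] : Fin 2 → k) i) from ?_]
      · exact aeval_consts _ _
      · funext i
        fin_cases i
        · exact hφC
        · exact hψC
    rw [h2] at hcst
    exact Polynomial.X_ne_C _ hcst
  have hwne : w ≠ 0 := by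
    intro hcon
    have hc0 : φ.coeff N = 0 := by simpa [hw] using congrFun hcon 0
    have hc1 : ψ.coeff N = 0 := by simpa [hw] using congrFun hcon 1
    rcases max_cases φ.natDegree ψ.natDegree with ⟨hmax, _⟩ | ⟨hmax, _⟩
    · have hlc : φ.leadingCoeff = 0 := by
        rw [Polynomial.leadingCoeff, show φ.natDegree = N by rw [hN, hmax]]
        exact hc0
      have hφ0 : φ = 0 := Polynomial.leadingCoeff_eq_zero.mp hlc
      have : N = 0 := by rw [hN, hmax, hφ0, Polynomial.natDegree_zero]
      omega
    · have hlc : ψ.leadingCoeff = 0 := by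
        rw [Polynomial.leadingCoeff, show ψ.natDegree = N by rw [hN, hmax]]
        exact hc1
      have hψ0 : ψ = 0 := Polynomial.leadingCoeff_eq_zero.mp hlc
      have : N = 0 := by rw [hN, hmax, hψ0, Polynomial.natDegree_zero]
      omega
  have hker : ∀ P : MvPolynomial (Fin 2) k,
      (MvPolynomial.aeval ![φ, ψ]) P = 0 → g ∣ P := by
    intro P hP
    obtain ⟨w0, hw0⟩ := h3φ
    obtain ⟨w1, hw1⟩ := h3ψ
    have hcomp : (Polynomial.aeval h) ((MvPolynomial.aeval ![φ, ψ]) P)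
        = (MvPolynomial.aeval ![Polynomial.aeval h φ, Polynomial.aeval h ψ]) P := by
      rw [comp_aeval_apply (Polynomial.aeval h) ![φ, ψ] P]
      have hfe : (fun i => (Polynomial.aeval h) (![φ, ψ] i))
          = ![Polynomial.aeval h φ, Polynomial.aeval h ψ] := by
        funext i; fin_cases i <;> rfl
      rw [hfe]
    rw [hP, map_zero] at hcomp
    have hdvd := dvd_aeval_sub (S := MvPolynomial (Fin 2) k) g
      ![Polynomial.aeval h φ, Polynomial.aeval h ψ] MvPolynomial.X ?_ P
    · rw [MvPolynomial.aeval_X_left_apply, ← hcomp, zero_sub] at hdvd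
      exact (dvd_neg).mp hdvd
    · intro i
      fin_cases i
      · show g ∣ Polynomial.aeval h φ - MvPolynomial.X 0
        rw [hw0]
        exact ⟨w0, by ring⟩
      · show g ∣ Polynomial.aeval h ψ - MvPolynomial.X 1
        rw [hw1]
        exact ⟨w1, by ring⟩
  have hprime : Prime g := by
    rw [← Ideal.span_singleton_prime hg0]
    have hspan : Ideal.span {g}
        = RingHom.ker (MvPolynomial.aeval ![φ, ψ] :
            MvPolynomial (Fin 2) k →ₐ[k] k[X]).toRingHom := by
      ext P
      rw [Ideal.mem_span_singleton, RingHom.mem_ker]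
      constructor
      · rintro ⟨q, rfl⟩
        show (MvPolynomial.aeval ![φ, ψ]) (g * q) = 0
        rw [map_mul, h1, zero_mul]
      · intro hk
        exact hker P hk
    rw [hspan]
    exact RingHom.ker_isPrime _
  have hEne : ∀ u : Fin 2 → k, u ≠ 0 → (MvPolynomial.aeval ![φ, ψ]) (ell u) ≠ 0 := by
    intro u hu hcon
    obtain ⟨q, hq⟩ := hker _ hcon
    have hq0 : q ≠ 0 := by
      intro h0
      rw [h0, mul_zero] at hq
      exact ell_ne_zero hu hq
    have hdg := congrArg MvPolynomial.totalDegree hq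
    rw [ell_totalDegree hu, totalDegree_mul_eq hg0 hq0, hgD] at hdg
    omega
  have hGne : ∀ u : Fin 2 → k, u ≠ 0 → (MvPolynomial.aeval (lineSub u)) g ≠ 0 := by
    intro u hu hcon
    obtain ⟨mu, vv, hmu1, hmu2⟩ := exists_mu hu
    have hdvd : ell u ∣ g := by
      have hdiff := dvd_aeval_sub (S := MvPolynomial (Fin 2) k) (ell u)
        MvPolynomial.X (fun i => (u i) • mu) ?_ g
      · rw [MvPolynomial.aeval_X_left_apply] at hdiff
        have hzero : (MvPolynomial.aeval (fun i => (u i) • mu)) g = 0 := by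
          have hcompk : (Polynomial.aeval mu) ((MvPolynomial.aeval (lineSub u)) g)
              = (MvPolynomial.aeval fun i => (Polynomial.aeval mu) (lineSub u i)) g :=
            comp_aeval_apply _ _ _
          rw [hcon, map_zero] at hcompk
          rw [show (fun i => (Polynomial.aeval mu) (lineSub u i))
              = fun i => (u i) • mu from ?_] at hcompk
          · exact hcompk.symm
          · funext i
            fin_cases i
            · show Polynomial.aeval mu ((u 0) • Polynomial.X) = u 0 • mu
              rw [map_smul, Polynomial.aeval_X]
            · show Polynomial.aeval mu ((u 1) • Polynomial.X) = u 1 • mu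
              rw [map_smul, Polynomial.aeval_X]
        rw [hzero, sub_zero] at hdiff
        exact hdiff
      · intro i
        exact ⟨MvPolynomial.C (vv i), by
          rw [hmu1 i, MvPolynomial.smul_eq_C_mul]; ring⟩
    obtain ⟨t, ht⟩ := hdvd
    have ht0 : t ≠ 0 := by
      intro h0
      rw [h0, mul_zero] at ht
      exact hg0 ht
    rcases (hprime.irreducible).isUnit_or_isUnit ht with hun | hun
    · obtain ⟨r, hr⟩ := isUnit_iff_exists_inv.mp hun
      have hr0 : r ≠ 0 := by
        intro h0
        rw [h0, mul_zero] at hr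
        exact one_ne_zero hr.symm
      have hdg := congrArg MvPolynomial.totalDegree hr
      rw [totalDegree_mul_eq (ell_ne_zero hu) hr0, ell_totalDegree hu,
        MvPolynomial.totalDegree_one] at hdg
      omega
    · obtain ⟨r, hr⟩ := isUnit_iff_exists_inv.mp hun
      have hr0 : r ≠ 0 := by
        intro h0
        rw [h0, mul_zero] at hr
        exact one_ne_zero hr.symm
      have htd : t.totalDegree = 0 := by
        have hdg := congrArg MvPolynomial.totalDegree hr
        rw [totalDegree_mul_eq ht0 hr0, MvPolynomial.totalDegree_one] at hdg
        omega
      have hdg := congrArg MvPolynomial.totalDegree ht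
      rw [totalDegree_mul_eq (ell_ne_zero hu) ht0, ell_totalDegree hu, htd, hgD] at hdg
      omega
  have htopg : ∀ u : Fin 2 → k,
      ((MvPolynomial.aeval (lineSub u)) g).natDegree ≤ D ∧
      ((MvPolynomial.aeval (lineSub u)) g).coeff D
        = MvPolynomial.eval u (homogeneousComponent D g) := by
    intro u
    have hcp := topcomp_P (q := lineSub u) (D := 1) le_rfl (lineSub_natDegree_le u)
      (P := g) (D' := D) (le_of_eq hgD)
    rcases hcp with ⟨ha, hb⟩
    rw [mul_one] at ha hb
    rw [lineSub_coeff_one] at hb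
    exact ⟨ha, hb⟩
  have hTell : ∀ u : Fin 2 → k, (MvPolynomial.aeval ![φ, ψ]) (ell u)
      = (u 1) • φ + (-(u 0)) • ψ := by
    intro u
    rw [ell, map_add, map_smul, map_smul, MvPolynomial.aeval_X, MvPolynomial.aeval_X]
    rfl
  have hEdegle : ∀ u : Fin 2 → k,
      ((MvPolynomial.aeval ![φ, ψ]) (ell u)).natDegree ≤ N := by
    intro u
    rw [hTell]
    apply (Polynomial.natDegree_add_le _ _).trans
    apply max_le
    · exact (natDegree_smul_le _ _).trans (le_max_left _ _)
    · exact (natDegree_smul_le _ _).trans (le_max_right _ _)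
  have hDN : D ≤ N := by
    obtain ⟨u', hu'⟩ : ∃ u', MvPolynomial.eval u' (homogeneousComponent D g) ≠ 0 := by
      by_contra hcon
      push_neg at hcon
      apply top_ne_zero hg0
      rw [hgD]
      exact MvPolynomial.funext (fun x => by rw [hcon x, map_zero])
    have hu'0 : u' ≠ 0 := by
      intro hcon
      rw [hcon] at hu'
      have h5 := eval_smul_of_isHomogeneous
        (homogeneousComponent_isHomogeneous D g) 0 (0 : Fin 2 → k)
      rw [zero_smul, zero_pow (show D ≠ 0 by omega), zero_mul] at h5
      exact hu' h5
    have hdim := dim_eq h1 h2 h3φ h3ψ hu'0 (hEne u' hu'0) (hGne u' hu'0)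
    have hgdeg : ((MvPolynomial.aeval (lineSub u')) g).natDegree = D := by
      apply le_antisymm (htopg u').1
      apply Polynomial.le_natDegree_of_ne_zero
      rw [(htopg u').2]
      exact hu'
    rw [hgdeg] at hdim
    calc D = ((MvPolynomial.aeval ![φ, ψ]) (ell u')).natDegree := hdim.symm
      _ ≤ N := hEdegle u'
  refine ⟨w, hwne, ?_⟩
  intro u hu hroot
  by_contra hcon
  push_neg at hcon
  have hcross : w 0 * u 1 - w 1 * u 0 ≠ 0 := by
    intro hc
    obtain ⟨lam, hlam⟩ := par_of_cross hwne hc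
    exact hcon lam hlam
  have hEcoeff_ne : ((MvPolynomial.aeval ![φ, ψ]) (ell u)).coeff N ≠ 0 := by
    rw [hTell, Polynomial.coeff_add, Polynomial.coeff_smul, Polynomial.coeff_smul]
    intro hc
    apply hcross
    show φ.coeff N * u 1 - ψ.coeff N * u 0 = 0
    simp only [smul_eq_mul] at hc
    linear_combination hc
  have hEdeg : ((MvPolynomial.aeval ![φ, ψ]) (ell u)).natDegree = N :=
    le_antisymm (hEdegle u) (Polynomial.le_natDegree_of_ne_zero hEcoeff_ne)
  have hdim := dim_eq h1 h2 h3φ h3ψ hu (hEne u hu) (hGne u hu)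
  have hglt : ((MvPolynomial.aeval (lineSub u)) g).natDegree < D := by
    rcases lt_or_eq_of_le (htopg u).1 with hlt | heq
    · exact hlt
    · exfalso
      apply hGne u hu
      apply Polynomial.leadingCoeff_eq_zero.mp
      rw [Polynomial.leadingCoeff, heq, (htopg u).2, hroot]
  rw [hEdeg] at hdim
  omega

lemma fin2_exists_other (i0 : Fin 2) : ∃ i1, i1 ≠ i0 ∧ ∀ j, j ≠ i0 → j = i1 := by
  fin_cases i0
  · exact ⟨1, by decide, by decide⟩
  · exact ⟨0, by decide, by decide⟩

lemma pair_prop {T : Fin 2 → MvPolynomial (Fin 2) k} {a b : k}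
    (hdep : a • T 0 = b • T 1) (hab : a ≠ 0 ∨ b ≠ 0) {i0 : Fin 2} (hne : T i0 ≠ 0) :
    ∃ c : Fin 2 → k, c i0 = 1 ∧ ∀ i, T i = c i • T i0 := by
  by_cases hi : i0 = 0
  · subst hi
    have hb : b ≠ 0 := by
      intro hb0
      rcases hab with ha | hb'
      · rw [hb0, zero_smul] at hdep
        exact hne ((smul_eq_zero.mp hdep).resolve_left ha)
      · exact hb' hb0
    refine ⟨(![1, a / b] : Fin 2 → k), rfl, ?_⟩
    intro i
    fin_cases i
    · show T 0 = (1:k) • T 0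
      rw [one_smul]
    · show T 1 = (a / b) • T 0
      have hbb : b * (a / b) = a := by field_simp
      have hkey : b • T 1 = b • ((a / b) • T 0) := by
        rw [← hdep, smul_smul, hbb]
      exact smul_right_injective _ hb hkey
  · have hi1 : i0 = 1 := by fin_cases i0 <;> simp_all
    subst hi1
    have ha : a ≠ 0 := by
      intro ha0
      rcases hab with ha' | hb
      · exact ha' ha0
      · rw [ha0, zero_smul] at hdep
        exact hne ((smul_eq_zero.mp hdep.symm).resolve_left hb)
    refine ⟨(![b / a, 1] : Fin 2 → k), rfl, ?_⟩
    intro i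
    fin_cases i
    · show T 0 = (b / a) • T 1
      have haa : a * (b / a) = b := by field_simp
      have hkey : a • T 0 = a • ((b / a) • T 1) := by
        rw [hdep, smul_smul, haa]
      exact smul_right_injective _ ha hkey
    · show T 1 = (1:k) • T 1
      rw [one_smul]

lemma linear_roots_par {p : MvPolynomial (Fin 2) k} (hp : p.IsHomogeneous 1) (hpne : p ≠ 0)
    {u v : Fin 2 → k} (hu : u ≠ 0) (hru : MvPolynomial.eval u p = 0)
    (hrv : MvPolynomial.eval v p = 0) : ∃ lam : k, v = lam • u := by
  have hst := isHomogeneous_one_struct hp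
  set a := MvPolynomial.coeff (Finsupp.single 0 1) p with hadef
  set b := MvPolynomial.coeff (Finsupp.single 1 1) p with hbdef
  have hab : a ≠ 0 ∨ b ≠ 0 := by
    by_contra hcon
    push_neg at hcon
    apply hpne
    rw [hst, hcon.1, hcon.2, zero_smul, zero_smul, add_zero]
  have heu : a * u 0 + b * u 1 = 0 := by
    rw [hst] at hru
    simpa [MvPolynomial.smul_eval] using hru
  have hev : a * v 0 + b * v 1 = 0 := by
    rw [hst] at hrv
    simpa [MvPolynomial.smul_eval] using hrv
  apply par_of_cross hu
  rcases hab with ha | hb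
  · have hcr : a * (u 0 * v 1 - u 1 * v 0) = 0 := by
      linear_combination (v 1) * heu - (u 1) * hev
    exact (mul_eq_zero.mp hcr).resolve_left ha
  · have hcr : b * (u 0 * v 1 - u 1 * v 0) = 0 := by
      linear_combination (-(v 0)) * heu + (u 0) * hev
    exact (mul_eq_zero.mp hcr).resolve_left hb

lemma eq_C_of_totalDegree_eq_zero {p : MvPolynomial (Fin 2) k} (hp : p.totalDegree = 0) :
    p = MvPolynomial.C (MvPolynomial.coeff 0 p) := by
  ext d
  rw [MvPolynomial.coeff_C]
  by_cases hd : (0 : Fin 2 →₀ ℕ) = d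
  · rw [if_pos hd, ← hd]
  · rw [if_neg hd]
    by_contra hne
    have hmem : d ∈ p.support := mem_support_iff.mpr hne
    have hz := (totalDegree_eq_zero_iff _ p).mp hp d hmem
    apply hd
    ext x
    rw [Finsupp.coe_zero, Pi.zero_apply, hz x]

lemma mvX_ne_C (i : Fin 2) (a : k) :
    (MvPolynomial.X i : MvPolynomial (Fin 2) k) ≠ MvPolynomial.C a := by
  intro h
  have hc := congrArg (MvPolynomial.coeff (Finsupp.single i 1)) h
  rw [coeff_X', if_pos rfl, MvPolynomial.coeff_C, if_neg ?_] at hc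
  · exact one_ne_zero hc
  · intro hcon
    have := DFunLike.congr_fun hcon i
    simp [Finsupp.single_apply] at this

lemma curve_side [IsAlgClosed k] {f finv : Fin 2 → MvPolynomial (Fin 2) k}
    (hf1 : ∀ i, (bind₁ f) (finv i) = MvPolynomial.X i)
    (hf2 : ∀ i, (bind₁ finv) (f i) = MvPolynomial.X i)
    {D : ℕ} (hD : 2 ≤ D) {i0 : Fin 2} (hi0 : (f i0).totalDegree = D) :
    ∃ w : Fin 2 → k, w ≠ 0 ∧ ∀ u : Fin 2 → k, u ≠ 0 →
      MvPolynomial.eval u (homogeneousComponent D (f i0)) = 0 → ∃ lam : k, u = lam • w := by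
  obtain ⟨i1, hi1ne, hi1other⟩ := fin2_exists_other i0
  set L : Fin 2 → k[X] := fun j => if j = i0 then 0 else Polynomial.X with hL
  set φ : k[X] := (MvPolynomial.aeval L) (finv 0) with hφdef
  set ψ : k[X] := (MvPolynomial.aeval L) (finv 1) with hψdef
  have hpair : (![φ, ψ] : Fin 2 → k[X]) = fun j => (MvPolynomial.aeval L) (finv j) := by
    funext j; fin_cases j <;> rfl
  have hcompose : ∀ P, (MvPolynomial.aeval ![φ, ψ]) P
      = (MvPolynomial.aeval L) ((bind₁ finv) P) := by
    intro P
    rw [hpair, MvPolynomial.aeval_bind₁]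
  have h1 : (MvPolynomial.aeval ![φ, ψ]) (f i0) = 0 := by
    rw [hcompose, hf2 i0, MvPolynomial.aeval_X, hL]
    simp
  have h2 : (MvPolynomial.aeval ![φ, ψ]) (f i1) = Polynomial.X := by
    rw [hcompose, hf2 i1, MvPolynomial.aeval_X, hL]
    simp [hi1ne]
  have h3 : ∀ r : Fin 2, ∃ w0, Polynomial.aeval (f i1) ((MvPolynomial.aeval L) (finv r))
      = MvPolynomial.X r + (f i0) * w0 := by
    intro r
    have hcompr : Polynomial.aeval (f i1) ((MvPolynomial.aeval L) (finv r))
        = (MvPolynomial.aeval fun j => Polynomial.aeval (f i1) (L j)) (finv r) :=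
      comp_aeval_apply _ _ _
    have hM : (fun j => Polynomial.aeval (f i1) (L j))
        = fun j => if j = i0 then 0 else f i1 := by
      funext j
      by_cases hj : j = i0
      · simp [hL, hj]
      · simp [hL, hj]
    have hdvd := dvd_aeval_sub (S := MvPolynomial (Fin 2) k) (f i0)
      (fun j => if j = i0 then 0 else f i1) f ?_ (finv r)
    · rw [show (MvPolynomial.aeval f) (finv r) = MvPolynomial.X r from hf1 r] at hdvd
      obtain ⟨w0, hw0⟩ := hdvd
      refine ⟨w0, ?_⟩
      rw [hcompr, hM]
      linear_combination hw0
    · intro j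
      by_cases hj : j = i0
      · subst hj
        refine ⟨-1, ?_⟩
        rw [mul_neg_one]
        simp
      · have hj1 : j = i1 := hi1other j hj
        simp only [hj1, if_neg hi1ne, sub_self]
        exact dvd_zero _
  exact curve_lemma hD hi0 h1 h2 (h3 0) (h3 1)

end Stmt10

theorem mvDeg_eq_sup {k : Type*} [CommSemiring k] {n : ℕ}
    (f : Fin n → MvPolynomial (Fin n) k) :
    mvDeg f = Finset.univ.sup fun i => (f i).totalDegree := rfl

open Stmt10 in
theorem stmt_10 (k : Type*) [Field k] [IsAlgClosed k]
    (f finv : Fin 2 → MvPolynomial (Fin 2) k)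
    (hf1 : ∀ i, MvPolynomial.bind₁ f (finv i) = MvPolynomial.X i)
    (hf2 : ∀ i, MvPolynomial.bind₁ finv (f i) = MvPolynomial.X i)
    (hdf : 2 ≤ mvDeg f) :
    -- `I_f ≠ I_{f⁻¹}` : there are nonzero, non-proportional representatives
    -- of the indeterminacy points of `f` and of `f⁻¹` at infinity
    (∃ u v : Fin 2 → k, u ≠ 0 ∧ v ≠ 0 ∧
        (∀ i, MvPolynomial.eval u (topPart f i) = 0) ∧
        (∀ i, MvPolynomial.eval v (topPart finv i) = 0) ∧
        ∀ c : k, v ≠ c • u)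
    ↔ mvDeg (mvComp f f) = (mvDeg f) ^ 2 := by
  classical
  simp only [topPart]
  set D := mvDeg f with hDdef
  set E := mvDeg finv with hEdef
  have hD2 : 2 ≤ D := hdf
  have hfdeg : ∀ i, (f i).totalDegree ≤ D := by
    intro i
    rw [hDdef, mvDeg_eq_sup]
    exact Finset.le_sup (f := fun j => (f j).totalDegree) (Finset.mem_univ i)
  have hgdeg : ∀ i, (finv i).totalDegree ≤ E := by
    intro i
    rw [hEdef, mvDeg_eq_sup]
    exact Finset.le_sup (f := fun j => (finv j).totalDegree) (Finset.mem_univ i)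
  have hE1 : 1 ≤ E := by
    by_contra hcon
    push_neg at hcon
    have h0 : (finv 0).totalDegree = 0 := by
      have := hgdeg 0
      omega
    have hC := eq_C_of_totalDegree_eq_zero h0
    have hX := hf1 0
    rw [hC, bind₁_C_right] at hX
    exact mvX_ne_C 0 _ hX.symm
  obtain ⟨i0, -, hi0⟩ := Finset.exists_mem_eq_sup (Finset.univ : Finset (Fin 2))
    ⟨0, Finset.mem_univ 0⟩ (fun i => (f i).totalDegree)
  obtain ⟨j0, -, hj0⟩ := Finset.exists_mem_eq_sup (Finset.univ : Finset (Fin 2))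
    ⟨0, Finset.mem_univ 0⟩ (fun i => (finv i).totalDegree)
  have hfi0 : (f i0).totalDegree = D := by
    rw [hDdef, mvDeg_eq_sup]
    exact hi0.symm
  have hgj0 : (finv j0).totalDegree = E := by
    rw [hEdef, mvDeg_eq_sup]
    exact hj0.symm
  have hfi0ne : f i0 ≠ 0 := by
    intro hz
    rw [hz, totalDegree_zero] at hfi0
    omega
  have hgj0ne : finv j0 ≠ 0 := by
    intro hz
    rw [hz, totalDegree_zero] at hgj0
    omega
  have hHne : homogeneousComponent D (f i0) ≠ 0 := by
    rw [← hfi0]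
    exact top_ne_zero hfi0ne
  have hH'ne : homogeneousComponent E (finv j0) ≠ 0 := by
    rw [← hgj0]
    exact top_ne_zero hgj0ne
  have hED2 : 2 ≤ E * D := le_trans (by omega) (Nat.mul_le_mul hE1 hD2)
  have hDE2 : 2 ≤ D * E := le_trans (by omega) (Nat.mul_le_mul hD2 hE1)
  have TOP1 : ∀ i, (MvPolynomial.bind₁ fun j => homogeneousComponent D (f j))
      (homogeneousComponent E (finv i)) = 0 := by
    intro i
    have h := (topcomp_M (q := f) (D := D) (by omega) hfdeg
      (P := finv i) (D' := E) (hgdeg i)).2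
    rw [hf1 i, homogComp_ne_of_isHomogeneous (isHomogeneous_X k i) (by omega)] at h
    exact h.symm
  have TOP2 : ∀ i, (MvPolynomial.bind₁ fun j => homogeneousComponent E (finv j))
      (homogeneousComponent D (f i)) = 0 := by
    intro i
    have h := (topcomp_M (q := finv) (D := E) (by omega) hgdeg
      (P := f i) (D' := D) (hfdeg i)).2
    rw [hf2 i, homogComp_ne_of_isHomogeneous (isHomogeneous_X k i) (by omega)] at h
    exact h.symm
  obtain ⟨a', b', hab', hdep'⟩ := split_dependence (m := D) (by omega)
    (homogeneousComponent_isHomogeneous D (f i0)) hHne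
    (homogeneousComponent E (finv 0)) (homogeneousComponent E (finv 1)) (by
      rw [← fun_fin2 (fun j => homogeneousComponent E (finv j))]
      exact TOP2 i0)
  obtain ⟨c', hc'1, hc'2⟩ := pair_prop
    (T := fun j => homogeneousComponent E (finv j)) hdep' hab' (i0 := j0) hH'ne
  obtain ⟨a, b, hab, hdep⟩ := split_dependence (m := E) (by omega)
    (homogeneousComponent_isHomogeneous E (finv j0)) hH'ne
    (homogeneousComponent D (f 0)) (homogeneousComponent D (f 1)) (by
      rw [← fun_fin2 (fun j => homogeneousComponent D (f j))]
      exact TOP1 j0)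
  obtain ⟨c, hc1, hc2⟩ := pair_prop
    (T := fun j => homogeneousComponent D (f j)) hdep hab (i0 := i0) hHne
  have hc2' : ∀ i, homogeneousComponent D (f i)
      = c i • homogeneousComponent D (f i0) := fun i => hc2 i
  have hc'2' : ∀ i, homogeneousComponent E (finv i)
      = c' i • homogeneousComponent E (finv j0) := fun i => hc'2 i
  have hHc' : MvPolynomial.eval c' (homogeneousComponent D (f i0)) = 0 := by
    have h := TOP2 i0
    rw [show (fun j => homogeneousComponent E (finv j))
        = fun j => c' j • homogeneousComponent E (finv j0) from funext hc'2'] at h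
    rw [bind₁_smul_pow (homogeneousComponent_isHomogeneous D (f i0)) c' _] at h
    rcases smul_eq_zero.mp h with h | h
    · exact h
    · exact absurd h (pow_ne_zero _ hH'ne)
  have hH'c : MvPolynomial.eval c (homogeneousComponent E (finv j0)) = 0 := by
    have h := TOP1 j0
    rw [show (fun j => homogeneousComponent D (f j))
        = fun j => c j • homogeneousComponent D (f i0) from funext hc2'] at h
    rw [bind₁_smul_pow (homogeneousComponent_isHomogeneous E (finv j0)) c _] at h
    rcases smul_eq_zero.mp h with h | h
    · exact h
    · exact absurd h (pow_ne_zero _ hHne)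
  have hcne : c ≠ 0 := by
    intro hcon
    rw [hcon] at hc1
    simp at hc1
  have hc'ne : c' ≠ 0 := by
    intro hcon
    rw [hcon] at hc'1
    simp at hc'1
  have hcomptop : ∀ i, homogeneousComponent (D*D) ((MvPolynomial.bind₁ f) (f i))
      = (c i * MvPolynomial.eval c (homogeneousComponent D (f i0))) •
        (homogeneousComponent D (f i0)) ^ D := by
    intro i
    rw [(topcomp_M (q := f) (D := D) (by omega) hfdeg
      (P := f i) (D' := D) (hfdeg i)).2]
    rw [hc2' i, map_smul]
    rw [show (fun j => homogeneousComponent D (f j))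
        = fun j => c j • homogeneousComponent D (f i0) from funext hc2']
    rw [bind₁_smul_pow (homogeneousComponent_isHomogeneous D (f i0)) c _, smul_smul]
  have hcompdeg : ∀ i, ((MvPolynomial.bind₁ f) (f i)).totalDegree ≤ D * D := fun i =>
    (topcomp_M (q := f) (D := D) (by omega) hfdeg (P := f i) (D' := D) (hfdeg i)).1
  have hRHS : mvDeg (mvComp f f) = D ^ 2 ↔
      MvPolynomial.eval c (homogeneousComponent D (f i0)) ≠ 0 := by
    constructor
    · intro hdd
      obtain ⟨i1, -, hi1⟩ := Finset.exists_mem_eq_sup (Finset.univ : Finset (Fin 2))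
        ⟨0, Finset.mem_univ 0⟩ (fun i => ((mvComp f f) i).totalDegree)
      have hdeq : ((MvPolynomial.bind₁ f) (f i1)).totalDegree = D * D := by
        have h := hi1
        rw [show Finset.univ.sup (fun i => ((mvComp f f) i).totalDegree)
            = mvDeg (mvComp f f) from (mvDeg_eq_sup _).symm, hdd] at h
        rw [show ((mvComp f f) i1) = (MvPolynomial.bind₁ f) (f i1) from rfl] at h
        rw [← h, pow_two]
      have hne0 : (MvPolynomial.bind₁ f) (f i1) ≠ 0 := by
        intro hz
        rw [hz, totalDegree_zero] at hdeq
        have h4 : 4 ≤ D * D := Nat.mul_le_mul hD2 hD2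
        omega
      have htop := top_ne_zero hne0
      rw [hdeq, hcomptop i1] at htop
      intro hc0
      apply htop
      rw [hc0, mul_zero, zero_smul]
    · intro hcH
      apply le_antisymm
      · rw [mvDeg_eq_sup]
        apply Finset.sup_le
        intro i _
        rw [pow_two]
        exact hcompdeg i
      · rw [pow_two]
        calc D*D ≤ ((MvPolynomial.bind₁ f) (f i0)).totalDegree := by
              apply le_totalDegree_of_homogComp_ne
              rw [hcomptop i0, hc1, one_mul]
              intro hz
              rcases smul_eq_zero.mp hz with h | h
              · exact hcH h
              · exact pow_ne_zero _ hHne h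
          _ = ((mvComp f f) i0).totalDegree := rfl
          _ ≤ mvDeg (mvComp f f) := by
              rw [mvDeg_eq_sup]
              exact Finset.le_sup (f := fun j => ((mvComp f f) j).totalDegree)
                (Finset.mem_univ i0)
  obtain ⟨wf, hwf0, hwfpar⟩ := curve_side hf1 hf2 hD2 hfi0
  have hparH : ∀ u v : Fin 2 → k, u ≠ 0 →
      MvPolynomial.eval u (homogeneousComponent D (f i0)) = 0 →
      MvPolynomial.eval v (homogeneousComponent D (f i0)) = 0 →
      ∃ lam : k, v = lam • u := by
    intro u v hu hru hrv
    by_cases hv0 : v = 0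
    · exact ⟨0, by rw [hv0, zero_smul]⟩
    obtain ⟨l1, hl1⟩ := hwfpar u hu hru
    obtain ⟨l2, hl2⟩ := hwfpar v hv0 hrv
    have hl1ne : l1 ≠ 0 := by
      intro h0
      rw [h0, zero_smul] at hl1
      exact hu hl1
    exact ⟨l2 / l1, by rw [hl2, hl1, smul_smul, div_mul_cancel₀ _ hl1ne]⟩
  have hparH' : ∀ u v : Fin 2 → k, u ≠ 0 →
      MvPolynomial.eval u (homogeneousComponent E (finv j0)) = 0 →
      MvPolynomial.eval v (homogeneousComponent E (finv j0)) = 0 →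
      ∃ lam : k, v = lam • u := by
    by_cases hE2 : 2 ≤ E
    · obtain ⟨wg, hwg0, hwgpar⟩ := curve_side hf2 hf1 hE2 hgj0
      intro u v hu hru hrv
      by_cases hv0 : v = 0
      · exact ⟨0, by rw [hv0, zero_smul]⟩
      obtain ⟨l1, hl1⟩ := hwgpar u hu hru
      obtain ⟨l2, hl2⟩ := hwgpar v hv0 hrv
      have hl1ne : l1 ≠ 0 := by
        intro h0
        rw [h0, zero_smul] at hl1
        exact hu hl1
      exact ⟨l2 / l1, by rw [hl2, hl1, smul_smul, div_mul_cancel₀ _ hl1ne]⟩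
    · have hE1' : E = 1 := by omega
      intro u v hu hru hrv
      exact linear_roots_par (hE1' ▸ homogeneousComponent_isHomogeneous E (finv j0))
        hH'ne hu hru hrv
  rw [hRHS]
  constructor
  · rintro ⟨u, v, hu, hv, huf, hvf, hnp⟩
    intro hcH0
    have hru : MvPolynomial.eval u (homogeneousComponent D (f i0)) = 0 := huf i0
    have hrv : MvPolynomial.eval v (homogeneousComponent E (finv j0)) = 0 := hvf j0
    obtain ⟨l, hl⟩ := hparH u c hu hru hcH0
    obtain ⟨m, hm⟩ := hparH' v c hv hrv hH'c
    have hmne : m ≠ 0 := by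
      intro h0
      rw [h0, zero_smul] at hm
      exact hcne hm
    apply hnp (m⁻¹ * l)
    have hv2 : m⁻¹ • c = v := by
      rw [hm, smul_smul, inv_mul_cancel₀ hmne, one_smul]
    rw [← hv2, hl, smul_smul]
  · intro hcH
    refine ⟨c', c, hc'ne, hcne, ?_, ?_, ?_⟩
    · intro i
      rw [hc2' i, MvPolynomial.smul_eval, hHc', mul_zero]
    · intro i
      rw [hc'2' i, MvPolynomial.smul_eval, hH'c, mul_zero]
    · intro γ hγ
      apply hcH
      rw [hγ, eval_smul_of_isHomogeneous
        (homogeneousComponent_isHomogeneous D (f i0)) γ c', hHc', mul_zero]
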